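/- Let n, r, s, m be positive integers, h_1,…,h_r ∈ ℝ^n, b ∈ ℝ^r, V_1,…,V_s ∈ ℝ^{n×n}, v ∈ ℝ^s. Define the polyhedra S = {x ∈ ℝ^n : h_i^T x ≤ b_i, i = 1,…,r} and U_0 = {A ∈ ℝ^{n×n} : Tr(V_j^T A) ≤ v_j, j = 1,…,s}. Let x_1,…,x_m, y_1,…,y_m ∈ ℝ^n and U_m = {A ∈ U_0 : A x_k = y_k, k = 1,…,m}, and assume U_m is nonempty. Then for every x ∈ ℝ^n the following are equivalent: (i) x ∈ S and A x ∈ S for all A ∈ U_m; (ii) there exist vectors μ^{(i)} ∈ ℝ^s with μ^{(i)} ≥ 0 (componentwise) and η_1^{(i)},…,η_m^{(i)} ∈ ℝ^n, for i = 1,…,r, such that for every i = 1,…,r: h_i^T x ≤ b_i, ∑_{k=1}^m y_k^T η_k^{(i)} + ∑_{j=1}^s μ_j^{(i)} v_j ≤ b_i, and x h_i^T = ∑_{k=1}^m x_k (η_k^{(i)})^T + ∑_{j=1}^s μ_j^{(i)} V_j^T (an equality of n×n matrices). -/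

import Mathlib

open Matrix


open Finset

variable {ι : Type*} [Fintype ι] {H : Type*} [NormedAddCommGroup H] [InnerProductSpace ℝ H]

/-- Conic Carathéodory. -/
theorem carath [DecidableEq ι] (c : ι → H) :
    ∀ (N : ℕ) (lam : ι → ℝ), ((univ : Finset ι).filter fun t => lam t ≠ 0).card ≤ N →
    (∀ t, 0 ≤ lam t) →
    ∃ (T : Finset ι), LinearIndependent ℝ (fun t : T => c t) ∧
      ∃ lam' : ι → ℝ, (∀ t, 0 ≤ lam' t) ∧ (∀ t ∉ T, lam' t = 0) ∧
        ∑ t, lam' t • c t = ∑ t, lam t • c t := by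
  intro N
  induction N with
  | zero =>
    intro lam hcard _
    refine ⟨∅, linearIndependent_empty_type, fun _ => 0, fun _ => le_rfl, fun _ _ => rfl, ?_⟩
    have hz : ∀ t, lam t = 0 := by
      intro t
      by_contra ht
      have : t ∈ (univ : Finset ι).filter fun t => lam t ≠ 0 := by simp [ht]
      have := card_pos.mpr ⟨t, this⟩
      omega
    simp [hz]
  | succ N ih =>
    intro lam hcard hpos
    set T : Finset ι := (univ : Finset ι).filter fun t => lam t ≠ 0 with hT
    by_cases hLI : LinearIndependent ℝ (fun t : T => c t)
    · exact ⟨T, hLI, lam, hpos, fun t ht => by simpa [hT] using ht, rfl⟩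
    · -- get nontrivial relation
      obtain ⟨g, hg0, i0, hgi0⟩ := Fintype.not_linearIndependent_iff.mp hLI
      classical
      set d : ι → ℝ := fun t => if ht : t ∈ T then g ⟨t, ht⟩ else 0 with hd
      have hdsum : ∑ t, d t • c t = 0 := by
        rw [← Finset.sum_subset (Finset.subset_univ T) (by intro t _ ht; simp [hd, ht])]
        rw [← Finset.sum_attach T fun t => d t • c t]
        simpa [hd] using hg0
      have hdne : d i0.1 ≠ 0 := by simpa [hd, i0.2] using hgi0
      -- WLOG some positive entry
      have main : ∀ d : ι → ℝ, (∑ t, d t • c t = 0) → (∃ t, 0 < d t) → (∀ t, d t ≠ 0 → t ∈ T) →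
          ∃ (T' : Finset ι), LinearIndependent ℝ (fun t : T' => c t) ∧
          ∃ lam' : ι → ℝ, (∀ t, 0 ≤ lam' t) ∧ (∀ t ∉ T', lam' t = 0) ∧
            ∑ t, lam' t • c t = ∑ t, lam t • c t := by
        intro d hdsum ⟨tp, htp⟩ hsupp
        set P : Finset ι := (univ : Finset ι).filter fun t => 0 < d t with hP
        have hPne : P.Nonempty := ⟨tp, by simp [hP, htp]⟩
        obtain ⟨t0, ht0P, ht0min⟩ := P.exists_min_image (fun t => lam t / d t) hPne
        have hd0 : 0 < d t0 := by simpa [hP] using ht0P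
        set α : ℝ := lam t0 / d t0 with hα
        have hα0 : 0 ≤ α := div_nonneg (hpos t0) hd0.le
        set lam2 : ι → ℝ := fun t => lam t - α * d t with hlam2
        have hlam2pos : ∀ t, 0 ≤ lam2 t := by
          intro t
          rcases le_or_gt (d t) 0 with hdt | hdt
          · have : α * d t ≤ 0 := mul_nonpos_of_nonneg_of_nonpos hα0 hdt
            simp only [hlam2]; linarith [hpos t]
          · have := ht0min t (by simp [hP, hdt])
            have : α ≤ lam t / d t := this
            simp only [hlam2]
            have := (le_div_iff₀ hdt).mp this
            linarith
        have hlam2sum : ∑ t, lam2 t • c t = ∑ t, lam t • c t := by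
          simp only [hlam2, sub_smul, Finset.sum_sub_distrib, ← smul_smul]
          rw [← Finset.smul_sum, hdsum, smul_zero, sub_zero]
        have hlam2t0 : lam2 t0 = 0 := by
          simp only [hlam2, hα]; field_simp; ring
        have hcard2 : ((univ : Finset ι).filter fun t => lam2 t ≠ 0).card ≤ N := by
          have hsub : ((univ : Finset ι).filter fun t => lam2 t ≠ 0) ⊆ T.erase t0 := by
            intro t ht
            simp only [mem_filter, mem_univ, true_and] at ht
            refine Finset.mem_erase.mpr ⟨?_, ?_⟩
            · rintro rfl; exact ht hlam2t0
            · by_contra htT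
              have h1 : lam t = 0 := by
                by_contra h; exact htT (by simp [hT, h])
              have h2 : d t = 0 := by
                by_contra h; exact htT (hsupp t h)
              exact ht (by simp [hlam2, h1, h2])
          have ht0T : t0 ∈ T := hsupp t0 hd0.ne'
          have := Finset.card_le_card hsub
          have := Finset.card_erase_lt_of_mem ht0T
          omega
        obtain ⟨T', hLI', lam', h1, h2, h3⟩ := ih lam2 hcard2 hlam2pos
        exact ⟨T', hLI', lam', h1, h2, h3.trans hlam2sum⟩
      rcases lt_trichotomy (d i0.1) 0 with hneg | hzero | hpospt
      · refine main (fun t => -d t) (by simp [neg_smul, Finset.sum_neg_distrib, hdsum]) ⟨i0.1, neg_pos.mpr hneg⟩ ?_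
        intro t ht
        simp only [ne_eq, neg_eq_zero] at ht
        by_contra htT; exact ht (by simp [hd, htT])
      · exact absurd hzero hdne
      · refine main d hdsum ⟨i0.1, hpospt⟩ ?_
        intro t ht
        by_contra htT; exact ht (by simp [hd, htT])

theorem isClosed_coneSet [FiniteDimensional ℝ H] (c : ι → H) :
    IsClosed {w : H | ∃ lam : ι → ℝ, (∀ t, 0 ≤ lam t) ∧ w = ∑ t, lam t • c t} := by
  classical
  have key : {w : H | ∃ lam : ι → ℝ, (∀ t, 0 ≤ lam t) ∧ w = ∑ t, lam t • c t} =
      ⋃ T ∈ {T : Finset ι | LinearIndependent ℝ (fun t : T => c t)},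
        (fun lam : ↥T → ℝ => ∑ t : T, lam t • c (t : ι)) ''
          {lam | ∀ t, 0 ≤ lam t} := by
    ext w
    simp only [Set.mem_setOf_eq, Set.mem_iUnion, Set.mem_image, exists_prop]
    constructor
    · rintro ⟨lam, hpos, rfl⟩
      obtain ⟨T, hLI, lam', h1, h2, h3⟩ := carath c (Fintype.card ι) lam
        (Finset.card_le_card (Finset.subset_univ _) |>.trans (by simp)) hpos
      refine ⟨T, hLI, fun t => lam' t, fun t => h1 t, ?_⟩
      rw [← h3]
      rw [← Finset.sum_subset (Finset.subset_univ T) (by intro t _ ht; simp [h2 t ht])]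
      rw [Finset.univ_eq_attach, Finset.sum_attach T fun t => lam' t • c t]
    · rintro ⟨T, hLI, lam, hpos, rfl⟩
      refine ⟨fun t => if ht : t ∈ T then lam ⟨t, ht⟩ else 0, ?_, ?_⟩
      · intro t; by_cases ht : t ∈ T <;> simp [ht, hpos]
      · rw [← Finset.sum_subset (Finset.subset_univ T) (by intro t _ ht; simp [ht])]
        rw [← Finset.sum_attach T fun t => (if ht : t ∈ T then lam ⟨t, ht⟩ else 0) • c t]
        congr 1; ext t; simp [t.2]
  rw [key]
  apply Set.Finite.isClosed_biUnion (Set.toFinite _)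
  intro T hT
  have hLI : LinearIndependent ℝ (fun t : T => c t) := hT
  set f : (↥T → ℝ) →ₗ[ℝ] H :=
    { toFun := fun lam => ∑ t : T, lam t • c (t : ι)
      map_add' := by intro a b; simp [add_smul, Finset.sum_add_distrib]
      map_smul' := by intro r a; simp [smul_smul, Finset.smul_sum] } with hf
  have hker : LinearMap.ker f = ⊥ := by
    rw [LinearMap.ker_eq_bot']
    intro lam hlam
    have := Fintype.linearIndependent_iff.mp hLI lam hlam
    funext t; exact this t
  have hce := LinearMap.isClosedEmbedding_of_injective hker
  have hcl : IsClosed {lam : ↥T → ℝ | ∀ t, 0 ≤ lam t} := by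
    have : {lam : ↥T → ℝ | ∀ t, 0 ≤ lam t} =
        ⋂ t, {lam : ↥T → ℝ | 0 ≤ lam t} := by ext; simp [Set.mem_iInter]
    rw [this]
    exact isClosed_iInter fun t => isClosed_le continuous_const (continuous_apply t)
  exact hce.isClosedMap _ hcl

open scoped RealInnerProductSpace in
theorem farkas_homog [FiniteDimensional ℝ H] (c : ι → H) (M : H)
    (hyp : ∀ A : H, (∀ t, ⟪c t, A⟫ ≤ 0) → ⟪M, A⟫ ≤ 0) :
    ∃ lam : ι → ℝ, (∀ t, 0 ≤ lam t) ∧ M = ∑ t, lam t • c t := by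
  classical
  set K : ConvexCone ℝ H :=
    { carrier := {w : H | ∃ lam : ι → ℝ, (∀ t, 0 ≤ lam t) ∧ w = ∑ t, lam t • c t}
      smul_mem' := by
        rintro a ha w ⟨lam, hpos, rfl⟩
        exact ⟨fun t => a * lam t, fun t => mul_nonneg ha.le (hpos t),
          by simp [smul_smul, Finset.smul_sum]⟩
      add_mem' := by
        rintro w ⟨lam, hpos, rfl⟩ w' ⟨lam', hpos', rfl⟩
        exact ⟨fun t => lam t + lam' t, fun t => add_nonneg (hpos t) (hpos' t),
          by simp [add_smul, Finset.sum_add_distrib]⟩ } with hK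
  by_contra hM
  push_neg at hM
  have hMK : M ∉ K := by
    rintro ⟨lam, hpos, rfl⟩
    exact (hM lam hpos) rfl
  obtain ⟨yy, hy1, hy2⟩ := ProperCone.hyperplane_separation'
    (⟨K.toPointedCone (.of_nonempty_of_isClosed ⟨0, fun _ => 0, fun _ => le_rfl, by simp⟩
      (isClosed_coneSet c)), isClosed_coneSet c⟩ : ProperCone ℝ H) hMK
  have hA : ∀ t, ⟪c t, -yy⟫ ≤ 0 := by
    intro t
    have : (0:ℝ) ≤ ⟪c t, yy⟫ := hy1 _ ⟨Pi.single t 1, by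
      intro u; by_cases h : u = t <;> simp [Pi.single_apply, h], by
      simp [Pi.single_apply, Finset.sum_ite_eq']⟩
    rw [inner_neg_right]; linarith
  have := hyp (-yy) hA
  rw [inner_neg_right] at this
  linarith

open scoped RealInnerProductSpace in
theorem farkas_affine [FiniteDimensional ℝ H] (c : ι → H) (d : ι → ℝ) (M : H) (bb : ℝ)
    (hfeas : ∃ A : H, ∀ t, ⟪c t, A⟫ ≤ d t)
    (hbdd : ∀ A : H, (∀ t, ⟪c t, A⟫ ≤ d t) → ⟪M, A⟫ ≤ bb) :
    ∃ lam : ι → ℝ, (∀ t, 0 ≤ lam t) ∧ M = ∑ t, lam t • c t ∧ ∑ t, lam t * d t ≤ bb := by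
  classical
  have : FiniteDimensional ℝ (WithLp 2 (H × ℝ)) :=
    (WithLp.linearEquiv 2 ℝ (H × ℝ)).symm.finiteDimensional
  set c' : Option ι → WithLp 2 (H × ℝ) := fun o => o.elim
    ((WithLp.equiv 2 (H × ℝ)).symm (0, -1))
    (fun t => (WithLp.equiv 2 (H × ℝ)).symm (c t, -(d t))) with hc'
  have hinner : ∀ (w : H) (e : ℝ) (A : WithLp 2 (H × ℝ)),
      ⟪(WithLp.equiv 2 (H × ℝ)).symm (w, e), A⟫ = ⟪w, A.fst⟫ + e * A.snd := by
    intro w e A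
    simp [WithLp.prod_inner_apply, WithLp.equiv_symm_apply, WithLp.toLp_fst, WithLp.toLp_snd,
      RCLike.inner_apply, mul_comm]
  have key : ∀ A : WithLp 2 (H × ℝ), (∀ t, ⟪c' t, A⟫ ≤ 0) →
      ⟪(WithLp.equiv 2 (H × ℝ)).symm (M, -bb), A⟫ ≤ 0 := by
    intro A hA
    have hτ0 : 0 ≤ A.snd := by
      have := hA none
      rw [hc'] at this
      simp only [Option.elim, hinner, inner_zero_left, zero_add] at this
      linarith
    have hAt : ∀ t, ⟪c t, A.fst⟫ ≤ d t * A.snd := by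
      intro t
      have := hA (some t)
      rw [hc'] at this
      simp only [Option.elim, hinner] at this
      linarith
    have goal2 : ⟪M, A.fst⟫ ≤ bb * A.snd := by
      rcases eq_or_lt_of_le hτ0 with hτ0' | hτ0'
      · obtain ⟨A₀, hA₀⟩ := hfeas
        have hs : ∀ sc : ℝ, 0 ≤ sc → ⟪M, A₀⟫ + sc * ⟪M, A.fst⟫ ≤ bb := by
          intro sc hsc
          have hfeas' : ∀ t, ⟪c t, A₀ + sc • A.fst⟫ ≤ d t := by
            intro t
            rw [inner_add_right, real_inner_smul_right]
            have h1 := hAt t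
            rw [← hτ0', mul_zero] at h1
            nlinarith [hA₀ t]
          have := hbdd _ hfeas'
          rwa [inner_add_right, real_inner_smul_right] at this
        rw [← hτ0', mul_zero]
        by_contra hMa
        push_neg at hMa
        have h0 : ⟪M, A₀⟫ ≤ bb := by simpa using hs 0 le_rfl
        have hsc0 : (0:ℝ) ≤ (bb - ⟪M, A₀⟫ + 1) / ⟪M, A.fst⟫ :=
          div_nonneg (by linarith) hMa.le
        have hlarge := hs _ hsc0
        rw [div_mul_cancel₀ _ hMa.ne'] at hlarge
        linarith
      · have hfeas' : ∀ t, ⟪c t, (1 / A.snd) • A.fst⟫ ≤ d t := by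
          intro t
          rw [real_inner_smul_right]
          rw [div_mul_eq_mul_div, mul_comm, ← div_mul_eq_mul_div, mul_one, div_le_iff₀ hτ0']
          exact hAt t
        have := hbdd _ hfeas'
        rw [real_inner_smul_right] at this
        calc ⟪M, A.fst⟫ = (1 / A.snd * ⟪M, A.fst⟫) * A.snd := by field_simp
          _ ≤ bb * A.snd := by nlinarith
    rw [hinner]
    nlinarith [goal2]
  obtain ⟨lam', hpos', hsum'⟩ := farkas_homog c' ((WithLp.equiv 2 (H × ℝ)).symm (M, -bb)) key
  have fst_sum : ∀ (u : Finset (Option ι)) (w : Option ι → WithLp 2 (H × ℝ)),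
      (∑ o ∈ u, w o).fst = ∑ o ∈ u, (w o).fst := by
    intro u w
    induction u using Finset.induction with
    | empty => simp [WithLp.zero_fst]
    | @insert a u ha ih => rw [Finset.sum_insert ha, Finset.sum_insert ha, WithLp.add_fst, ih]
  have snd_sum : ∀ (u : Finset (Option ι)) (w : Option ι → WithLp 2 (H × ℝ)),
      (∑ o ∈ u, w o).snd = ∑ o ∈ u, (w o).snd := by
    intro u w
    induction u using Finset.induction with
    | empty => simp [WithLp.zero_snd]
    | @insert a u ha ih => rw [Finset.sum_insert ha, Finset.sum_insert ha, WithLp.add_snd, ih]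
  have h1 := congrArg (fun w : WithLp 2 (H × ℝ) => w.fst) hsum'
  have h2 := congrArg (fun w : WithLp 2 (H × ℝ) => w.snd) hsum'
  simp only [WithLp.equiv_symm_apply, WithLp.toLp_fst, WithLp.toLp_snd, fst_sum, snd_sum] at h1 h2
  refine ⟨fun t => lam' (some t), fun t => hpos' _, ?_, ?_⟩
  · rw [h1, Fintype.sum_option]
    simp only [hc', Option.elim, WithLp.smul_fst, WithLp.equiv_symm_apply, WithLp.toLp_fst, smul_zero, zero_add]
  · have h2' : -bb = lam' none * (-1) + ∑ t, lam' (some t) * (-(d t)) := by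
      rw [h2, Fintype.sum_option]
      simp only [hc', Option.elim, WithLp.smul_snd, WithLp.equiv_symm_apply, WithLp.toLp_snd, smul_eq_mul]
    have := hpos' none
    have : ∑ t, lam' (some t) * d t = bb - lam' none := by
      have hneg : ∑ t, lam' (some t) * (-(d t)) = -∑ t, lam' (some t) * d t := by
        simp [mul_neg]
      rw [hneg] at h2'
      linarith
    rw [this]
    linarith [hpos' none]

open Matrix in
open scoped RealInnerProductSpace in
/-- LP-duality characterization of the one-step safe set for linear dynamics with a
polyhedral safety region `S` and polyhedral uncertainty set `U₀`, after `m`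
measurements `(x k, y k)`. -/
theorem stmt_0 (n r s m : ℕ) (hn : 0 < n) (hr : 0 < r) (hs : 0 < s) (hm : 0 < m)
    (h : Fin r → Fin n → ℝ) (b : Fin r → ℝ)
    (V : Fin s → Matrix (Fin n) (Fin n) ℝ) (v : Fin s → ℝ)
    (x : Fin m → Fin n → ℝ) (y : Fin m → Fin n → ℝ)
    (S : Set (Fin n → ℝ)) (hS : S = {z | ∀ i, h i ⬝ᵥ z ≤ b i})
    (U0 : Set (Matrix (Fin n) (Fin n) ℝ))
    (hU0 : U0 = {A | ∀ j, ((V j)ᵀ * A).trace ≤ v j})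
    (Um : Set (Matrix (Fin n) (Fin n) ℝ))
    (hUm : Um = {A ∈ U0 | ∀ k, A *ᵥ x k = y k})
    (hne : Um.Nonempty) :
    ∀ z : Fin n → ℝ,
      (z ∈ S ∧ ∀ A ∈ Um, A *ᵥ z ∈ S) ↔
      ∃ (μ : Fin r → Fin s → ℝ) (η : Fin r → Fin m → Fin n → ℝ),
        ∀ i : Fin r,
          (∀ j, 0 ≤ μ i j) ∧
          h i ⬝ᵥ z ≤ b i ∧
          (∑ k, y k ⬝ᵥ η i k) + (∑ j, μ i j * v j) ≤ b i ∧
          vecMulVec z (h i) = (∑ k, vecMulVec (x k) (η i k)) + ∑ j, μ i j • (V j)ᵀ := by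
  classical
  intro z
  -- embedding of index functions into Euclidean space
  set emb : ((Fin n × Fin n) → ℝ) → EuclideanSpace ℝ (Fin n × Fin n) :=
    fun f => (WithLp.equiv 2 _).symm f with hemb
  have hinner : ∀ f g : (Fin n × Fin n) → ℝ,
      ⟪emb f, emb g⟫ = ∑ pq : Fin n × Fin n, f pq * g pq := by
    intro f g
    simp [hemb, PiLp.inner_apply, RCLike.inner_apply, WithLp.equiv_symm_apply, PiLp.toLp_apply, mul_comm]
  -- trace formula
  have htrace : ∀ (W A : Matrix (Fin n) (Fin n) ℝ),
      (Wᵀ * A).trace = ∑ pq : Fin n × Fin n, W pq.1 pq.2 * A pq.1 pq.2 := by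
    intro W A
    rw [Matrix.trace, Fintype.sum_prod_type]
    rw [Finset.sum_comm]
    simp [Matrix.diag, Matrix.mul_apply, Matrix.transpose_apply]
  constructor
  · rintro ⟨hzS, hAz⟩
    -- hard direction: apply affine Farkas per row i
    have main : ∀ i : Fin r, ∃ (μi : Fin s → ℝ) (ηi : Fin m → Fin n → ℝ),
        (∀ j, 0 ≤ μi j) ∧
        (∑ k, y k ⬝ᵥ ηi k) + (∑ j, μi j * v j) ≤ b i ∧
        vecMulVec z (h i) = (∑ k, vecMulVec (x k) (ηi k)) + ∑ j, μi j • (V j)ᵀ := by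
      intro i
      set ι' := (Fin s) ⊕ ((Fin m × Fin n) ⊕ (Fin m × Fin n)) with hι'
      set E : Fin m × Fin n → (Fin n × Fin n) → ℝ :=
        fun kp pq => if pq.1 = kp.2 then x kp.1 pq.2 else 0 with hE
      set cvec : ι' → EuclideanSpace ℝ (Fin n × Fin n) := fun t =>
        Sum.elim (fun j => emb fun pq => V j pq.1 pq.2)
          (Sum.elim (fun kp => emb (E kp)) (fun kp => emb (-E kp))) t with hcvec
      set dvec : ι' → ℝ := fun t =>
        Sum.elim v (Sum.elim (fun kp => y kp.1 kp.2) (fun kp => -(y kp.1 kp.2))) t with hdvec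
      set Mi : EuclideanSpace ℝ (Fin n × Fin n) :=
        emb (fun pq => h i pq.1 * z pq.2) with hMi
      -- key computation: constraints on `emb`-side equal matrix statements
      have hEinner : ∀ (A : Matrix (Fin n) (Fin n) ℝ) (kp : Fin m × Fin n),
          ⟪emb (E kp), emb fun pq => A pq.1 pq.2⟫ = (A *ᵥ x kp.1) kp.2 := by
        intro A kp
        rw [hinner, Fintype.sum_prod_type]
        rw [Finset.sum_eq_single kp.2]
        · simp [hE, Matrix.mulVec, dotProduct, mul_comm]
        · intro p _ hp; simp [hE, hp]
        · simp
      have hMinner : ∀ (A : Matrix (Fin n) (Fin n) ℝ),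
          ⟪Mi, emb fun pq => A pq.1 pq.2⟫ = h i ⬝ᵥ (A *ᵥ z) := by
        intro A
        rw [hMi, hinner, Fintype.sum_prod_type]
        simp only [dotProduct, Matrix.mulVec]
        refine Finset.sum_congr rfl fun p _ => ?_
        rw [Finset.mul_sum]
        refine Finset.sum_congr rfl fun q _ => ?_
        ring
      have hfeas : ∃ A : EuclideanSpace ℝ (Fin n × Fin n), ∀ t, ⟪cvec t, A⟫ ≤ dvec t := by
        obtain ⟨A₀, hA₀⟩ := hne
        rw [hUm, Set.mem_sep_iff, hU0, Set.mem_setOf_eq] at hA₀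
        refine ⟨emb fun pq => A₀ pq.1 pq.2, ?_⟩
        rintro (j | kp | kp)
        · simp only [hcvec, Sum.elim_inl, hdvec]
          rw [hinner, ← htrace]
          exact hA₀.1 j
        · simp only [hcvec, Sum.elim_inr, Sum.elim_inl, hdvec]
          rw [hEinner, hA₀.2 kp.1]
        · simp only [hcvec, Sum.elim_inr, hdvec]
          have : ⟪emb (-E kp), emb fun pq => A₀ pq.1 pq.2⟫
              = -⟪emb (E kp), emb fun pq => A₀ pq.1 pq.2⟫ := by
            rw [hinner, hinner, ← Finset.sum_neg_distrib]
            exact Finset.sum_congr rfl fun pq _ => by simp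
          rw [this, hEinner, hA₀.2 kp.1]
      have hbdd : ∀ A : EuclideanSpace ℝ (Fin n × Fin n),
          (∀ t, ⟪cvec t, A⟫ ≤ dvec t) → ⟪Mi, A⟫ ≤ b i := by
        intro A hA
        set Amat : Matrix (Fin n) (Fin n) ℝ :=
          Matrix.of fun p q => (WithLp.equiv 2 ((Fin n × Fin n) → ℝ)) A (p, q) with hAmat
        have hArepr : A = emb fun pq => Amat pq.1 pq.2 := by
          rw [hemb]
          apply (WithLp.equiv 2 ((Fin n × Fin n) → ℝ)).symm_apply_eq.mpr.comp id
          ext pq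
          simp [hAmat]
        have hAmem : Amat ∈ Um := by
          rw [hUm, Set.mem_sep_iff, hU0, Set.mem_setOf_eq]
          constructor
          · intro j
            have := hA (Sum.inl j)
            simp only [hcvec, Sum.elim_inl, hdvec] at this
            rw [hArepr] at this
            rw [htrace, ← hinner]
            exact this
          · intro k
            funext p
            have h1 := hA (Sum.inr (Sum.inl (k, p)))
            have h2 := hA (Sum.inr (Sum.inr (k, p)))
            simp only [hcvec, Sum.elim_inr, Sum.elim_inl, hdvec] at h1 h2
            rw [hArepr] at h1 h2
            rw [hEinner] at h1
            have hneg : ⟪emb (-E (k, p)), emb fun pq => Amat pq.1 pq.2⟫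
                = -⟪emb (E (k, p)), emb fun pq => Amat pq.1 pq.2⟫ := by
              rw [hinner, hinner, ← Finset.sum_neg_distrib]
              exact Finset.sum_congr rfl fun pq _ => by simp
            rw [hneg, hEinner] at h2
            have := hAz Amat
            linarith
        have := hAz Amat hAmem
        rw [hS, Set.mem_setOf_eq] at this
        rw [hArepr, hMinner]
        exact this i
      obtain ⟨lam, hlampos, hlamsum, hlamval⟩ := farkas_affine cvec dvec Mi (b i) hfeas hbdd
      refine ⟨fun j => lam (Sum.inl j),
        fun k => fun q => lam (Sum.inr (Sum.inl (k, q))) - lam (Sum.inr (Sum.inr (k, q))),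
        fun j => hlampos _, ?_, ?_⟩
      · -- dual objective bound
        have expand : ∑ t, lam t * dvec t = (∑ j, lam (Sum.inl j) * v j)
            + ((∑ kp : Fin m × Fin n, lam (Sum.inr (Sum.inl kp)) * y kp.1 kp.2)
              + ∑ kp : Fin m × Fin n, lam (Sum.inr (Sum.inr kp)) * (-(y kp.1 kp.2))) := by
          rw [Fintype.sum_sum_type, Fintype.sum_sum_type]
          simp [hdvec]
        have hgoal1 : (∑ k, y k ⬝ᵥ fun q =>
              lam (Sum.inr (Sum.inl (k, q))) - lam (Sum.inr (Sum.inr (k, q))))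
            = (∑ kp : Fin m × Fin n, lam (Sum.inr (Sum.inl kp)) * y kp.1 kp.2)
              - ∑ kp : Fin m × Fin n, lam (Sum.inr (Sum.inr kp)) * y kp.1 kp.2 := by
          rw [← Finset.sum_sub_distrib, Fintype.sum_prod_type]
          exact Finset.sum_congr rfl fun k _ =>
            Finset.sum_congr rfl fun q _ => by ring
        have hneg : ∑ kp : Fin m × Fin n, lam (Sum.inr (Sum.inr kp)) * (-(y kp.1 kp.2))
            = -∑ kp : Fin m × Fin n, lam (Sum.inr (Sum.inr kp)) * y kp.1 kp.2 := by
          simp [mul_neg]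
        rw [hgoal1]
        rw [expand, hneg] at hlamval
        linarith
      · -- matrix equality
        have equiv_sum : ∀ (u : Finset ι') (w : ι' → EuclideanSpace ℝ (Fin n × Fin n)),
            (WithLp.equiv 2 ((Fin n × Fin n) → ℝ)) (∑ t ∈ u, w t)
              = ∑ t ∈ u, (WithLp.equiv 2 ((Fin n × Fin n) → ℝ)) (w t) := by
          intro u w
          induction u using Finset.induction with
          | empty => simp
          | @insert a u ha ih =>
            rw [Finset.sum_insert ha, Finset.sum_insert ha]
            exact congrArg (fun q => (WithLp.equiv 2 ((Fin n × Fin n) → ℝ)) (w a) + q) ih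
        have hpt := congrArg (WithLp.equiv 2 ((Fin n × Fin n) → ℝ)) hlamsum
        rw [equiv_sum] at hpt
        simp only [hMi, hemb, Equiv.apply_symm_apply] at hpt
        have hment : ∀ p q : Fin n, h i q * z p
            = ∑ t, lam t * (WithLp.equiv 2 ((Fin n × Fin n) → ℝ)) (cvec t) (q, p) := by
          intro p q
          have := congrFun hpt (q, p)
          rw [Finset.sum_apply] at this
          simpa [WithLp.equiv_apply, WithLp.ofLp_smul] using this
        ext p q
        simp only [Matrix.vecMulVec_apply, Matrix.add_apply, Matrix.sum_apply,
          Matrix.smul_apply, Matrix.transpose_apply, smul_eq_mul]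
        have := hment p q
        rw [Fintype.sum_sum_type, Fintype.sum_sum_type] at this
        simp only [hcvec, Sum.elim_inl, Sum.elim_inr, hemb, Equiv.apply_symm_apply] at this
        have hE1 : ∑ kp : Fin m × Fin n, lam (Sum.inr (Sum.inl kp)) * E kp (q, p)
            = ∑ k, lam (Sum.inr (Sum.inl (k, q))) * x k p := by
          rw [Fintype.sum_prod_type]
          refine Finset.sum_congr rfl fun k _ => ?_
          rw [Finset.sum_eq_single q]
          · simp [hE]
          · intro p₀ _ hp₀; simp [hE, Ne.symm hp₀]
          · simp
        have hE2 : ∑ kp : Fin m × Fin n, lam (Sum.inr (Sum.inr kp)) * (-E kp) (q, p)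
            = -∑ k, lam (Sum.inr (Sum.inr (k, q))) * x k p := by
          rw [← Finset.sum_neg_distrib, Fintype.sum_prod_type]
          refine Finset.sum_congr rfl fun k _ => ?_
          rw [Finset.sum_eq_single q]
          · simp [hE]
          · intro p₀ _ hp₀; simp [hE, Ne.symm hp₀]
          · simp
        rw [hE1, hE2] at this
        have hsplit : ∑ k, x k p * (lam (Sum.inr (Sum.inl (k, q))) - lam (Sum.inr (Sum.inr (k, q))))
            = (∑ k, lam (Sum.inr (Sum.inl (k, q))) * x k p)
              - ∑ k, lam (Sum.inr (Sum.inr (k, q))) * x k p := by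
          rw [← Finset.sum_sub_distrib]
          exact Finset.sum_congr rfl fun k _ => by ring
        rw [hsplit]
        linarith [this]
    choose μ η h1 h2 h3 using main
    exact ⟨μ, η, fun i => ⟨h1 i, by rw [hS] at hzS; exact hzS i, h2 i, h3 i⟩⟩
  · rintro ⟨μ, η, hcond⟩
    constructor
    · rw [hS]; intro i; exact (hcond i).2.1
    · intro A hA
      rw [hUm, Set.mem_sep_iff, hU0, Set.mem_setOf_eq] at hA
      rw [hS, Set.mem_setOf_eq]
      intro i
      obtain ⟨hμpos, _, hval, hmat⟩ := hcond i
      -- h i ⬝ᵥ (A *ᵥ z) = ∑ k η i k ⬝ᵥ y k + ∑ j μ i j * trace(V jᵀ A) ≤ b i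
      have hment : ∀ p q, z p * h i q = (∑ k, x k p * η i k q) + ∑ j, μ i j * V j q p := by
        intro p q
        have := congrFun (congrFun hmat p) q
        simpa [Matrix.vecMulVec_apply, Matrix.add_apply, Matrix.sum_apply, Matrix.smul_apply,
          Matrix.transpose_apply] using this
      have key : h i ⬝ᵥ (A *ᵥ z)
          = (∑ k, η i k ⬝ᵥ y k) + ∑ j, μ i j * ((V j)ᵀ * A).trace := by
        have p1 : ∀ q, ∑ p, (∑ k, x k p * η i k q) * A q p
            = ∑ k, η i k q * (A *ᵥ x k) q := by
          intro q
          calc ∑ p, (∑ k, x k p * η i k q) * A q p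
              = ∑ p, ∑ k, (x k p * η i k q) * A q p :=
                Finset.sum_congr rfl fun p _ => by rw [Finset.sum_mul]
            _ = ∑ k, ∑ p, (x k p * η i k q) * A q p := Finset.sum_comm
            _ = ∑ k, η i k q * (A *ᵥ x k) q := by
                refine Finset.sum_congr rfl fun k _ => ?_
                rw [Matrix.mulVec, dotProduct, Finset.mul_sum]
                exact Finset.sum_congr rfl fun p _ => by ring
        calc h i ⬝ᵥ (A *ᵥ z)
            = ∑ q, ∑ p, (z p * h i q) * A q p := by
              rw [dotProduct]
              refine Finset.sum_congr rfl fun q _ => ?_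
              rw [Matrix.mulVec, dotProduct, Finset.mul_sum]
              exact Finset.sum_congr rfl fun p _ => by ring
          _ = ∑ q, ∑ p, ((∑ k, x k p * η i k q) + ∑ j, μ i j * V j q p) * A q p := by
              refine Finset.sum_congr rfl fun q _ => Finset.sum_congr rfl fun p _ => ?_
              rw [hment p q]
          _ = (∑ q, ∑ p, (∑ k, x k p * η i k q) * A q p)
              + ∑ q, ∑ p, (∑ j, μ i j * V j q p) * A q p := by
              rw [← Finset.sum_add_distrib]
              refine Finset.sum_congr rfl fun q _ => ?_
              rw [← Finset.sum_add_distrib]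
              exact Finset.sum_congr rfl fun p _ => by ring
          _ = (∑ k, η i k ⬝ᵥ y k) + ∑ j, μ i j * ((V j)ᵀ * A).trace := by
              congr 1
              · calc ∑ q, ∑ p, (∑ k, x k p * η i k q) * A q p
                    = ∑ q, ∑ k, η i k q * (A *ᵥ x k) q :=
                      Finset.sum_congr rfl fun q _ => p1 q
                  _ = ∑ k, ∑ q, η i k q * (A *ᵥ x k) q := Finset.sum_comm
                  _ = ∑ k, η i k ⬝ᵥ y k := by
                      refine Finset.sum_congr rfl fun k _ => ?_
                      rw [hA.2 k, dotProduct]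
              · calc ∑ q, ∑ p, (∑ j, μ i j * V j q p) * A q p
                    = ∑ q, ∑ j, ∑ p, (μ i j * V j q p) * A q p := by
                      refine Finset.sum_congr rfl fun q _ => ?_
                      rw [← Finset.sum_comm]
                      exact Finset.sum_congr rfl fun p _ => by rw [Finset.sum_mul]
                  _ = ∑ j, ∑ q, ∑ p, (μ i j * V j q p) * A q p := Finset.sum_comm
                  _ = ∑ j, μ i j * ((V j)ᵀ * A).trace := by
                      refine Finset.sum_congr rfl fun j _ => ?_
                      rw [htrace (V j) A, Fintype.sum_prod_type, Finset.mul_sum]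
                      refine Finset.sum_congr rfl fun q _ => ?_
                      rw [Finset.mul_sum]
                      exact Finset.sum_congr rfl fun p _ => by ring
      rw [key]
      have hb1 : ∑ k, η i k ⬝ᵥ y k = ∑ k, y k ⬝ᵥ η i k := by
        exact Finset.sum_congr rfl fun k _ => dotProduct_comm _ _
      have hb2 : ∑ j, μ i j * ((V j)ᵀ * A).trace ≤ ∑ j, μ i j * v j :=
        Finset.sum_le_sum fun j _ => mul_le_mul_of_nonneg_left (hA.1 j) (hμpos j)
      linarith [hval]
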